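/- Correctness of the separation condition (one direction): if the optimal value V of the separation problem SEP is 0, then the jamming solution is robust, i.e., for every band-assignment w feasible for the RHS-multiband set and every jammed testpoint t ∈ T', the realized SIR balance Δ̄SIR_t + Σ_{k∈K} d_t^k·w_t^k is strictly less than the received jamming power JAM_t. -/

import Mathlib

/-- Correctness of the separation condition (one direction): if the optimal value of
SEP is 0, then the jamming solution is robust. -/
theorem sep_value_zero_implies_robust {α K : Type*} [Fintype α] [Fintype K]
    (T' : Finset α) (ΔSIRbar JAM : α → ℝ) (d : α → K → ℝ) (l u : K → ℕ)
    (hnom : ∀ t ∈ T', JAM t > ΔSIRbar t)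
    (hV : ∀ v : α → ℝ, ∀ w : α → K → ℝ,
      (∀ t, v t = 0 ∨ v t = 1) →
      (∀ t k, w t k = 0 ∨ w t k = 1) →
      (∀ t ∈ T', ∑ k, w t k ≤ 1) →
      (∀ k, (l k : ℝ) ≤ ∑ t ∈ T', w t k ∧ ∑ t ∈ T', w t k ≤ (u k : ℝ)) →
      (∀ t ∈ T', v t = 1 → ∑ k, d t k * w t k ≥ JAM t - ΔSIRbar t) →
      ∑ t ∈ T', v t = 0) :
    ∀ w : α → K → ℝ,
      (∀ t k, w t k = 0 ∨ w t k = 1) →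
      (∀ t ∈ T', ∑ k, w t k ≤ 1) →
      (∀ k, (l k : ℝ) ≤ ∑ t ∈ T', w t k ∧ ∑ t ∈ T', w t k ≤ (u k : ℝ)) →
      ∀ t ∈ T', ΔSIRbar t + ∑ k, d t k * w t k < JAM t := by
  classical
  intro w hw01 hwrow hwcol t0 ht0
  by_contra h
  push_neg at h
  have hsum := hV (fun t => if t = t0 then 1 else 0) w
    (fun t => by by_cases ht : t = t0 <;> simp [ht])
    hw01 hwrow hwcol
    (fun t ht hv => by
      by_cases hte : t = t0
      · subst hte; linarith
      · simp [hte] at hv)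
  simp only [Finset.sum_ite_eq', ht0, if_pos] at hsum
  norm_num at hsum
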